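/- Assume: (a) ω = cf(μ) < μ < 2^ω; (b) (μ_n : n < ω) is a sequence of regular cardinals with supremum μ and J is an ideal on ω extending the ideal of finite sets; (c) (f_α : α < λ) is a sequence witnessing tcf(∏_{n<ω} μ_n, J) = λ; (d) μ ≤ ν < λ; (e) for every A ⊆ λ with |A| = ℵ₁ one has |{f_α(n) : α ∈ A, n < ω}| = ℵ₁. Then 𝔤𝔭 ≠ ν. -/

import Mathlib

open Cardinal Set

universe u

/-- `C` is a club subset of the ordinal `δ`: it consists of ordinals below `δ`,
is unbounded in `δ`, and contains every limit ordinal `β < δ` with `sup (C ∩ β) = β`. -/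
def IsClubIn (δ : Ordinal) (C : Set Ordinal) : Prop :=
  C ⊆ Set.Iio δ ∧ (∀ a < δ, ∃ b ∈ C, a ≤ b) ∧
    ∀ β < δ, Order.IsSuccLimit β → sSup (C ∩ Set.Iio β) = β → β ∈ C

/-- `A` is a set of ordinals of cardinality `c` (witnessed by a bijective
enumeration of `A` by the ordinals below `c.ord`). -/
def HasCard (A : Set Ordinal.{u}) (c : Cardinal.{u}) : Prop :=
  ∃ e : Ordinal → Ordinal, Set.BijOn e (Set.Iio c.ord) A

/-- An ideal on the set of ordinals below `θ`. -/
structure IdealOn (θ : Ordinal) where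
  sets : Set (Set Ordinal)
  subset_Iio : ∀ A ∈ sets, A ⊆ Set.Iio θ
  mem_of_subset : ∀ A ∈ sets, ∀ B ⊆ A, B ∈ sets
  union_mem : ∀ A ∈ sets, ∀ B ∈ sets, A ∪ B ∈ sets
  proper : Set.Iio θ ∉ sets

/-- `(f α : α < lam.ord)` is a `<_J`-increasing, `<_J`-cofinal sequence in the
product `∏_{i<θ} μs i`, witnessing `tcf (∏_{i<θ} μs i, J) = lam`. -/
def IsTcfWitness (θ : Ordinal) (J : IdealOn θ) (μs : Ordinal → Cardinal)
    (lam : Cardinal) (f : Ordinal → Ordinal → Ordinal) : Prop :=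
  (∀ α < lam.ord, ∀ i < θ, f α i < (μs i).ord) ∧
  (∀ α β, α < β → β < lam.ord → {i | i < θ ∧ f β i ≤ f α i} ∈ J.sets) ∧
  (∀ g : Ordinal → Ordinal, (∀ i < θ, g i < (μs i).ord) →
    ∃ α < lam.ord, {i | i < θ ∧ f α i ≤ g i} ∈ J.sets)

/-- The Galvin cardinal characteristic `𝔤𝔭`: the least cardinal `κ` such that every
family `{C α : α < κ⁺}` of clubs of `ω₁` has a subfamily of size `ℵ₁`
whose intersection is a club of `ω₁`. -/
noncomputable def gp : Cardinal.{u} :=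
  sInf {κ : Cardinal.{u} | ∀ C : Ordinal.{u} → Set Ordinal.{u},
    (∀ α < (Order.succ κ).ord, IsClubIn (Cardinal.aleph 1).ord (C α)) →
    ∃ b : Ordinal.{u} → Ordinal.{u},
      (∀ β < (Cardinal.aleph 1).ord, b β < (Order.succ κ).ord) ∧
      Set.InjOn b (Set.Iio (Cardinal.aleph 1).ord) ∧
      IsClubIn (Cardinal.aleph 1).ord (⋂ β ∈ Set.Iio (Cardinal.aleph 1).ord, C (b β))}


/-- auxiliary: the set whose infimum is `gp`. -/
def GalvinS : Set Cardinal.{u} :=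
  {κ : Cardinal.{u} | ∀ C : Ordinal.{u} → Set Ordinal.{u},
    (∀ α < (Order.succ κ).ord, IsClubIn (Cardinal.aleph 1).ord (C α)) →
    ∃ b : Ordinal.{u} → Ordinal.{u},
      (∀ β < (Cardinal.aleph 1).ord, b β < (Order.succ κ).ord) ∧
      Set.InjOn b (Set.Iio (Cardinal.aleph 1).ord) ∧
      IsClubIn (Cardinal.aleph 1).ord (⋂ β ∈ Set.Iio (Cardinal.aleph 1).ord, C (b β))}

lemma gp_eq_sInf : gp.{u} = sInf GalvinS.{u} := rfl

/-- An intersection of clubs that is unbounded is a club. -/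
lemma isClubIn_iInter {ι : Type*} [Nonempty ι] {δ : Ordinal.{u}} {K : ι → Set Ordinal.{u}}
    (hK : ∀ n, IsClubIn δ (K n)) (hub : ∀ a < δ, ∃ x ∈ ⋂ n, K n, a ≤ x) :
    IsClubIn δ (⋂ n, K n) := by
  refine ⟨fun x hx => (hK (Classical.arbitrary ι)).1 (Set.mem_iInter.1 hx _), hub, ?_⟩
  intro γ hγ hlim hsup
  have hne' : ((⋂ n, K n) ∩ Set.Iio γ).Nonempty := by
    rcases Set.eq_empty_or_nonempty ((⋂ n, K n) ∩ Set.Iio γ) with h | h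
    · exfalso
      rw [h, csSup_empty] at hsup
      exact hlim.pos.ne' ((Ordinal.bot_eq_zero ▸ hsup :)).symm
    · exact h
  refine Set.mem_iInter.2 fun n => (hK n).2.2 γ hγ hlim (le_antisymm ?_ ?_)
  · exact csSup_le (hne'.mono fun x hx => ⟨Set.mem_iInter.1 hx.1 n, hx.2⟩)
      fun y hy => le_of_lt hy.2
  · calc γ = sSup ((⋂ m, K m) ∩ Set.Iio γ) := hsup.symm
      _ ≤ sSup (K n ∩ Set.Iio γ) := csSup_le_csSup ⟨γ, fun y hy => le_of_lt hy.2⟩ hne'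
          (fun x hx => ⟨Set.mem_iInter.1 hx.1 n, hx.2⟩)

/-- A countable intersection of clubs of `ω₁` is a club. -/
lemma isClubIn_iInter_nat {K : ℕ → Set Ordinal.{u}}
    (hK : ∀ n, IsClubIn (Cardinal.aleph 1).ord (K n)) :
    IsClubIn (Cardinal.aleph 1).ord (⋂ n, K n) := by
  have hlimω₁ : Order.IsSuccLimit ((Cardinal.aleph 1).ord) :=
    Cardinal.isSuccLimit_ord (Cardinal.aleph0_le_aleph 1)
  refine isClubIn_iInter hK ?_
  intro a ha
  have hnext : ∀ (n : ℕ) (o : Ordinal.{u}), o < (Cardinal.aleph 1).ord →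
      ∃ o', (o' ∈ K n ∧ o < o') ∧ o' < (Cardinal.aleph 1).ord := by
    intro n o ho
    obtain ⟨c, hc, hoc⟩ := (hK n).2.1 (Order.succ o) (hlimω₁.succ_lt ho)
    exact ⟨c, ⟨hc, (Order.lt_succ o).trans_le hoc⟩, (hK n).1 hc⟩
  choose nxt hnxt1 hnxt2 using hnext
  let x : ℕ → {o : Ordinal.{u} // o < (Cardinal.aleph 1).ord} := fun k =>
    Nat.rec (motive := fun _ => {o : Ordinal.{u} // o < (Cardinal.aleph 1).ord})
      ⟨a, ha⟩ (fun k p => ⟨nxt (Nat.unpair k).1 p.1 p.2, hnxt2 _ _ _⟩) k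
  have hx0 : (x 0).1 = a := rfl
  have hxmem : ∀ k, (x (k+1)).1 ∈ K (Nat.unpair k).1 := fun k => (hnxt1 _ _ _).1
  have hxlt : ∀ k, (x k).1 < (x (k+1)).1 := fun k => (hnxt1 _ _ _).2
  have hmono : Monotone fun k => (x k).1 := (strictMono_nat_of_lt_succ hxlt).monotone
  set s : Ordinal.{u} := ⨆ k, (x k).1 with hs_def
  have hles : ∀ k, (x k).1 ≤ s := fun k => le_ciSup (Ordinal.bddAbove_range _) k
  have hlts : ∀ k, (x k).1 < s := fun k => lt_of_lt_of_le (hxlt k) (hles (k+1))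
  have hs : s < (Cardinal.aleph 1).ord :=
    Cardinal.iSup_lt_ord_lift_of_isRegular Cardinal.isRegular_aleph_one
      (by rw [Cardinal.mk_nat, Cardinal.lift_aleph0]; exact Cardinal.aleph0_lt_aleph_one)
      (fun k => (x k).2)
  have hlims : Order.IsSuccLimit s := by
    rw [Ordinal.isSuccLimit_iff, Order.isSuccPrelimit_iff_succ_lt]
    constructor
    · exact (lt_of_le_of_lt (zero_le) (hlts 0)).ne'
    · intro c hc
      obtain ⟨k, hk⟩ := Ordinal.lt_iSup_iff.1 hc
      exact lt_of_le_of_lt (Order.succ_le_of_lt hk) ((hxlt k).trans_le (hles (k+1)))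
  have hKs : ∀ n, s ∈ K n := by
    intro n
    apply (hK n).2.2 s hs hlims
    have hbdd : BddAbove (K n ∩ Set.Iio s) := ⟨s, fun y hy => le_of_lt hy.2⟩
    have hinK : ∀ k, (x (Nat.pair n k + 1)).1 ∈ K n ∩ Set.Iio s := by
      intro k
      refine ⟨?_, Set.mem_Iio.2 (hlts (Nat.pair n k + 1))⟩
      have := hxmem (Nat.pair n k)
      rwa [Nat.unpair_pair] at this
    apply le_antisymm
    · exact csSup_le ⟨_, hinK 0⟩ fun y hy => le_of_lt hy.2
    · refine le_of_forall_lt fun c hc => ?_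
      obtain ⟨k, hk⟩ := Ordinal.lt_iSup_iff.1 hc
      have hkle : (x k).1 ≤ (x (Nat.pair n k)).1 := hmono (Nat.right_le_pair n k)
      exact lt_of_lt_of_le (lt_of_lt_of_le hk (hkle.trans (le_of_lt (hxlt _))))
        (le_csSup hbdd (hinK k))
  exact ⟨s, Set.mem_iInter.2 hKs, hx0 ▸ hles 0⟩

lemma mk_Iio_aleph1 : #(Set.Iio (Cardinal.aleph 1).ord : Set Ordinal.{u}) = Cardinal.aleph 1 := by
  rw [Ordinal.mk_Iio_ordinal, Cardinal.card_ord, Cardinal.lift_aleph, Ordinal.lift_one]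

/-- Assume `ω = cf μ < μ < 2^ω`, `(μs n : n < ω)` is a sequence of
regular cardinals with supremum `μ`, `J` is an ideal on `ω` extending the ideal of
finite (= bounded) sets, `f` witnesses `tcf (∏_{n<ω} μs n, J) = lam`, `μ ≤ ν < lam`, and
every `A ⊆ lam` of size `ℵ₁` satisfies `|{f α n : α ∈ A, n < ω}| = ℵ₁`. Then `𝔤𝔭 ≠ ν`. -/
theorem gp_ne_of_scale_pp (μ ν lam : Cardinal.{u}) (μs : Ordinal.{u} → Cardinal.{u})
    (J : IdealOn Ordinal.omega0.{u}) (f : Ordinal.{u} → Ordinal.{u} → Ordinal.{u})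
    (hcof : μ.ord.cof = Cardinal.aleph0)
    (hsing : Cardinal.aleph0 < μ)
    (hcont : μ < 2 ^ Cardinal.aleph0)
    (hreg : ∀ i < Ordinal.omega0, (μs i).IsRegular)
    (hsup : sSup (μs '' Set.Iio Ordinal.omega0) = μ)
    (hJ : ∀ δ < Ordinal.omega0, Set.Iio δ ∈ J.sets)
    (hf : IsTcfWitness Ordinal.omega0 J μs lam f)
    (hμν : μ ≤ ν) (hνlam : ν < lam)
    (hA : ∀ A : Set Ordinal.{u}, A ⊆ Set.Iio lam.ord →
      HasCard A (Cardinal.aleph 1) →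
      HasCard {x : Ordinal | ∃ α ∈ A, ∃ i < Ordinal.omega0, f α i = x} (Cardinal.aleph 1)) :
    gp ≠ ν := by
  intro hgp
  rw [gp_eq_sInf] at hgp
  have hν0 : (0 : Cardinal.{u}) < ν := lt_of_le_of_lt (zero_le) (lt_of_lt_of_le hsing hμν)
  -- the Galvin set is nonempty and ν is its least element
  have hSne : GalvinS.{u}.Nonempty := by
    by_contra h
    rw [Set.not_nonempty_iff_eq_empty] at h
    rw [h, Cardinal.sInf_empty] at hgp
    exact hν0.ne hgp
  have hν : ν ∈ GalvinS.{u} := hgp ▸ csInf_mem hSne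
  -- each μs i is strictly below ν, hence not in the Galvin set
  have hμsν : ∀ i, i < Ordinal.omega0 → μs i < ν := by
    intro i hi
    have hle : μs i ≤ μ := by
      have : μs i ∈ μs '' Set.Iio Ordinal.omega0 := ⟨i, hi, rfl⟩
      have hbd : BddAbove (μs '' Set.Iio Ordinal.omega0) := Cardinal.bddAbove_of_small
      exact hsup ▸ le_csSup hbd this
    rcases lt_or_eq_of_le hle with h | h
    · exact lt_of_lt_of_le h hμν
    · exfalso
      have := (hreg i hi).2
      rw [h, hcof] at this
      exact absurd (lt_of_le_of_lt this hsing) (lt_irrefl _)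
  have hμsnotS : ∀ i, i < Ordinal.omega0 → μs i ∉ GalvinS.{u} := by
    intro i hi hmem
    have := csInf_le (OrderBot.bddBelow _) hmem
    rw [hgp] at this
    exact absurd (lt_of_le_of_lt this (hμsν i hi)) (lt_irrefl _)
  -- choose bad families D i witnessing μs i ∉ GalvinS
  have hDex : ∀ i : Ordinal.{u}, ∃ Dd : Ordinal.{u} → Set Ordinal.{u}, i < Ordinal.omega0 →
      ((∀ α < (Order.succ (μs i)).ord, IsClubIn (Cardinal.aleph 1).ord (Dd α)) ∧
       ¬∃ b : Ordinal.{u} → Ordinal.{u},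
          (∀ β < (Cardinal.aleph 1).ord, b β < (Order.succ (μs i)).ord) ∧
          Set.InjOn b (Set.Iio (Cardinal.aleph 1).ord) ∧
          IsClubIn (Cardinal.aleph 1).ord
            (⋂ β ∈ Set.Iio (Cardinal.aleph 1).ord, Dd (b β))) := by
    intro i
    by_cases hi : i < Ordinal.omega0
    · have hnot := hμsnotS i hi
      rw [GalvinS, Set.mem_setOf_eq] at hnot
      obtain ⟨C, hC⟩ := not_forall.1 hnot
      rw [_root_.not_imp] at hC
      exact ⟨C, fun _ => hC⟩
    · exact ⟨fun _ => ∅, fun h => absurd h hi⟩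
  choose D hD using hDex
  have hsuccle : (Order.succ ν).ord ≤ lam.ord :=
    Cardinal.ord_le_ord.2 (Order.succ_le_of_lt hνlam)
  -- the family of clubs indexed by ν⁺
  set Cfam : Ordinal.{u} → Set Ordinal.{u} :=
    fun α => ⋂ n : ℕ, D (n : Ordinal) (f α (n : Ordinal)) with hCfam
  have hCclub : ∀ α < (Order.succ ν).ord, IsClubIn (Cardinal.aleph 1).ord (Cfam α) := by
    intro α hα
    have hαlam : α < lam.ord := lt_of_lt_of_le hα hsuccle
    refine isClubIn_iInter_nat fun n => ?_
    refine (hD _ (Ordinal.nat_lt_omega0 n)).1 _ ?_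
    exact lt_of_lt_of_le (hf.1 α hαlam _ (Ordinal.nat_lt_omega0 n))
      (Cardinal.ord_le_ord.2 (Order.le_succ _))
  rw [GalvinS, Set.mem_setOf_eq] at hν
  obtain ⟨b, hb1, hb2, hb3⟩ := hν Cfam hCclub
  -- the ℵ₁-sized index set and its value sets
  set As : Set Ordinal.{u} := b '' Set.Iio (Cardinal.aleph 1).ord with hAs
  have hAsub : As ⊆ Set.Iio lam.ord := by
    rintro _ ⟨β, hβ, rfl⟩
    exact lt_of_lt_of_le (hb1 β hβ) hsuccle
  have hVcard := hA As hAsub ⟨b, hb2.bijOn_image⟩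
  set B : Ordinal.{u} → Set Ordinal.{u} := fun i => (fun α => f α i) '' As with hB
  -- each value set B i is countable
  have hBcnt : ∀ i, i < Ordinal.omega0 → (B i).Countable := by
    intro i hi
    by_contra hc
    rw [Cardinal.countable_iff_lt_aleph_one, not_lt] at hc
    have h3 : #(Set.Iio (Cardinal.aleph 1).ord : Set Ordinal.{u}) ≤ #(B i) := by
      rw [mk_Iio_aleph1]
      exact hc
    obtain ⟨j⟩ := (Cardinal.le_def _ _).1 h3
    set b' : Ordinal.{u} → Ordinal.{u} := fun β =>
      if h : β < (Cardinal.aleph 1).ord then ((j ⟨β, h⟩ : ↥(B i)) : Ordinal) else 0 with hb'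
    have hb'val : ∀ β, ∀ h : β < (Cardinal.aleph 1).ord,
        b' β = ((j ⟨β, h⟩ : ↥(B i)) : Ordinal) := by
      intro β h; rw [hb']; exact dif_pos h
    have hb'mem : ∀ β, ∀ h : β < (Cardinal.aleph 1).ord, b' β ∈ B i := by
      intro β h; rw [hb'val β h]; exact (j ⟨β, h⟩).2
    have hp1 : ∀ β < (Cardinal.aleph 1).ord, b' β < (Order.succ (μs i)).ord := by
      intro β hβ
      obtain ⟨α, hαA, hfeq⟩ := hb'mem β hβ
      rw [← hfeq]
      exact lt_of_lt_of_le (hf.1 α (hAsub hαA) i hi)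
        (Cardinal.ord_le_ord.2 (Order.le_succ _))
    have hp2 : Set.InjOn b' (Set.Iio (Cardinal.aleph 1).ord) := by
      intro β₁ h₁ β₂ h₂ heq
      rw [hb'val β₁ h₁, hb'val β₂ h₂] at heq
      have := j.injective (Subtype.ext heq)
      exact Subtype.mk_eq_mk.1 this
    have hp3 : IsClubIn (Cardinal.aleph 1).ord
        (⋂ β ∈ Set.Iio (Cardinal.aleph 1).ord, D i (b' β)) := by
      rw [Set.biInter_eq_iInter]
      haveI : Nonempty ↥(Set.Iio (Cardinal.aleph 1).ord : Set Ordinal.{u}) :=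
        ⟨⟨0, (Cardinal.isSuccLimit_ord (Cardinal.aleph0_le_aleph 1)).pos⟩⟩
      refine isClubIn_iInter (fun β => (hD i hi).1 _ (hp1 β.1 β.2)) ?_
      intro a ha
      obtain ⟨x, hxE, hax⟩ := hb3.2.1 a ha
      refine ⟨x, Set.mem_iInter.2 fun β => ?_, hax⟩
      obtain ⟨α, hαA, hfeq⟩ := hb'mem β.1 β.2
      obtain ⟨β₂, hβ₂, rfl⟩ := hαA
      have hx1 : x ∈ Cfam (b β₂) := Set.mem_iInter₂.1 hxE β₂ hβ₂
      obtain ⟨n, rfl⟩ := Ordinal.lt_omega0.1 hi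
      have hx2 : x ∈ D (n : Ordinal) (f (b β₂) (n : Ordinal)) := Set.mem_iInter.1 hx1 n
      rwa [← hfeq]
    exact (hD i hi).2 ⟨b', hp1, hp2, hp3⟩
  -- hence the whole value set is countable: contradiction with hVcard
  have hIiocnt : (Set.Iio Ordinal.omega0.{u} : Set Ordinal.{u}).Countable := by
    have : (Set.Iio Ordinal.omega0.{u} : Set Ordinal.{u}) =
        Set.range (fun n : ℕ => (n : Ordinal.{u})) := by
      ext o
      simp only [Set.mem_Iio, Set.mem_range]
      exact ⟨fun h => (Ordinal.lt_omega0.1 h).imp (fun n hn => hn.symm),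
        fun ⟨n, hn⟩ => hn ▸ Ordinal.nat_lt_omega0 n⟩
    rw [this]
    exact Set.countable_range _
  have hVcnt : {x : Ordinal.{u} | ∃ α ∈ As, ∃ i < Ordinal.omega0, f α i = x}.Countable := by
    refine Set.Countable.mono ?_ (Set.Countable.biUnion hIiocnt fun i hi => hBcnt i hi)
    rintro x ⟨α, hα, i, hi, hfx⟩
    exact Set.mem_iUnion₂.2 ⟨i, hi, ⟨α, hα, hfx⟩⟩
  obtain ⟨e, he⟩ := hVcard
  have h1 : #(Set.Iio (Cardinal.aleph 1).ord : Set Ordinal.{u}) =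
      #{x : Ordinal.{u} | ∃ α ∈ As, ∃ i < Ordinal.omega0, f α i = x} :=
    Cardinal.mk_congr (Set.BijOn.equiv e he)
  rw [mk_Iio_aleph1] at h1
  rw [Cardinal.countable_iff_lt_aleph_one, ← h1] at hVcnt
  exact absurd hVcnt (lt_irrefl _)
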